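/- Let f : [1,∞) → ℝ be a bounded continuous function. Then lim_{n→∞} (1/n) Σ_{i=1}^n f(n/i) = ∫_0^1 f(1/t) dt. -/

import Mathlib

open Filter Topology MeasureTheory

/-- If `f : [1,∞) → ℝ` is bounded and continuous, then
`lim_{n→∞} (1/n) Σ_{i=1}^n f(n/i) = ∫_0^1 f(1/t) dt`. -/
theorem tendsto_average_f_n_div_i
    (f : ℝ → ℝ) (hf : ContinuousOn f (Set.Ici (1 : ℝ)))
    (hbd : ∃ M : ℝ, ∀ x ∈ Set.Ici (1 : ℝ), |f x| ≤ M) :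
    Tendsto
      (fun n : ℕ => (1 / (n : ℝ)) * ∑ i ∈ Finset.Icc 1 n, f ((n : ℝ) / i))
      atTop (𝓝 (∫ t in Set.Ioc (0 : ℝ) 1, f (1 / t))) := by
  obtain ⟨M, hM⟩ := hbd
  have hM0 : 0 ≤ M := (abs_nonneg _).trans (hM 1 (Set.mem_Ici.2 le_rfl))
  set μ : Measure ℝ := volume.restrict (Set.Ioc (0 : ℝ) 1) with hμ
  set g : ℕ → ℝ → ℝ := fun n t =>
    ∑ i ∈ Finset.Icc 1 n,
      Set.indicator (Set.Ioc (((i : ℝ) - 1) / n) ((i : ℝ) / n))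
        (fun _ => f ((n : ℝ) / i)) t with hg
  -- key evaluation: on the interval ((i₀-1)/n, i₀/n], g n equals f (n / i₀)
  have hval : ∀ n : ℕ, ∀ i₀ ∈ Finset.Icc 1 n, ∀ t : ℝ,
      t ∈ Set.Ioc (((i₀ : ℝ) - 1) / n) ((i₀ : ℝ) / n) → g n t = f ((n : ℝ) / i₀) := by
    intro n i₀ hi₀mem t ht
    have hi₀ := Finset.mem_Icc.1 hi₀mem
    have hnpos : 0 < (n : ℝ) := by
      have : 0 < n := lt_of_lt_of_le hi₀.1 hi₀.2
      exact_mod_cast this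
    simp only [hg]
    rw [Finset.sum_eq_single_of_mem i₀ hi₀mem]
    · exact Set.indicator_of_mem ht _
    · intro j hj hji
      have hjm := Finset.mem_Icc.1 hj
      apply Set.indicator_of_notMem
      intro hmem
      rcases lt_or_gt_of_ne hji with h | h
      · -- j < i₀, so t ≤ j/n ≤ (i₀-1)/n < t, contradiction
        have h1 : (j : ℝ) ≤ (i₀ : ℝ) - 1 := by
          have : (j : ℝ) + 1 ≤ (i₀ : ℝ) := by exact_mod_cast Nat.succ_le_of_lt h
          linarith
        have h2 : (j : ℝ) / n ≤ ((i₀ : ℝ) - 1) / n := by gcongr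
        have := hmem.2
        have := ht.1
        linarith
      · -- i₀ < j, so (j-1)/n < t ≤ i₀/n ≤ (j-1)/n, contradiction
        have h1 : (i₀ : ℝ) ≤ (j : ℝ) - 1 := by
          have : (i₀ : ℝ) + 1 ≤ (j : ℝ) := by exact_mod_cast Nat.succ_le_of_lt h
          linarith
        have h2 : (i₀ : ℝ) / n ≤ ((j : ℝ) - 1) / n := by gcongr
        have := hmem.1
        have := ht.2
        linarith
  -- values of f appearing are at points ≥ 1
  have harg : ∀ n : ℕ, ∀ i ∈ Finset.Icc 1 n, (1 : ℝ) ≤ (n : ℝ) / i := by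
    intro n i hi
    have hi' := Finset.mem_Icc.1 hi
    have hipos : 0 < (i : ℝ) := by exact_mod_cast hi'.1
    rw [one_le_div hipos]
    exact_mod_cast hi'.2
  -- uniform bound
  have hbound : ∀ n : ℕ, ∀ t : ℝ, |g n t| ≤ M := by
    intro n t
    by_cases h : ∃ i ∈ Finset.Icc 1 n, t ∈ Set.Ioc (((i : ℝ) - 1) / n) ((i : ℝ) / n)
    · obtain ⟨i, hi, ht⟩ := h
      rw [hval n i hi t ht]
      exact hM _ (harg n i hi)
    · push_neg at h
      simp only [hg]
      rw [Finset.sum_eq_zero fun i hi => Set.indicator_of_notMem (h i hi) _]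
      simpa using hM0
  -- measurability
  have hmeas : ∀ n : ℕ, AEStronglyMeasurable (g n) μ := by
    intro n
    apply Measurable.aestronglyMeasurable
    exact Finset.measurable_sum _ fun i _ => measurable_const.indicator measurableSet_Ioc
  -- pointwise convergence
  have hlim : ∀ᵐ t ∂μ, Tendsto (fun n => g n t) atTop (𝓝 (f (1 / t))) := by
    rw [hμ, ae_restrict_iff' measurableSet_Ioc]
    refine ae_of_all _ fun t ht => ?_
    have ht0 : 0 < t := ht.1
    have ht1 : t ≤ 1 := ht.2
    -- for n ≥ 1, g n t = f (n / ⌈n t⌉₊)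
    have hkey : ∀ n : ℕ, 1 ≤ n →
        ⌈(n : ℝ) * t⌉₊ ∈ Finset.Icc 1 n ∧
          t ∈ Set.Ioc (((⌈(n : ℝ) * t⌉₊ : ℝ) - 1) / n) ((⌈(n : ℝ) * t⌉₊ : ℝ) / n) := by
      intro n hn
      have hnpos : 0 < (n : ℝ) := by exact_mod_cast hn
      have hle : (n : ℝ) * t ≤ ⌈(n : ℝ) * t⌉₊ := Nat.le_ceil _
      have hlt : (⌈(n : ℝ) * t⌉₊ : ℝ) < (n : ℝ) * t + 1 :=
        Nat.ceil_lt_add_one (by positivity)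
      constructor
      · rw [Finset.mem_Icc]
        constructor
        · exact Nat.ceil_pos.2 (by positivity)
        · exact Nat.ceil_le.2 (by nlinarith)
      · constructor
        · rw [div_lt_iff₀ hnpos]
          nlinarith
        · rw [le_div_iff₀ hnpos]
          nlinarith
    -- the ratio n / ⌈n t⌉₊ tends to 1/t
    have hA : Tendsto (fun n : ℕ => (⌈(n : ℝ) * t⌉₊ : ℝ) / n) atTop (𝓝 t) := by
      have h1 : Tendsto (fun n : ℕ => t + 1 / (n : ℝ)) atTop (𝓝 t) := by
        have := (tendsto_const_nhds : Tendsto (fun _ : ℕ => t) atTop (𝓝 t)).add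
          tendsto_one_div_atTop_nhds_zero_nat
        simpa using this
      refine tendsto_of_tendsto_of_tendsto_of_le_of_le'
        (tendsto_const_nhds : Tendsto (fun _ : ℕ => t) atTop (𝓝 t)) h1 ?_ ?_
      · filter_upwards [eventually_ge_atTop 1] with n hn
        have hnpos : 0 < (n : ℝ) := by exact_mod_cast hn
        rw [le_div_iff₀ hnpos]
        have := Nat.le_ceil ((n : ℝ) * t)
        linarith
      · filter_upwards [eventually_ge_atTop 1] with n hn
        have hnpos : 0 < (n : ℝ) := by exact_mod_cast hn
        have hlt : (⌈(n : ℝ) * t⌉₊ : ℝ) < (n : ℝ) * t + 1 :=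
          Nat.ceil_lt_add_one (by positivity)
        rw [div_le_iff₀ hnpos]
        have h2 : (t + 1 / n) * (n : ℝ) = (n : ℝ) * t + 1 := by field_simp
        linarith
    have hB : Tendsto (fun n : ℕ => (n : ℝ) / (⌈(n : ℝ) * t⌉₊ : ℝ)) atTop (𝓝 (1 / t)) := by
      have := hA.inv₀ (ne_of_gt ht0)
      simpa [inv_div, one_div] using this
    have hC : Tendsto (fun n : ℕ => (n : ℝ) / (⌈(n : ℝ) * t⌉₊ : ℝ)) atTop
        (𝓝[Set.Ici (1 : ℝ)] (1 / t)) := by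
      rw [tendsto_nhdsWithin_iff]
      refine ⟨hB, ?_⟩
      filter_upwards [eventually_ge_atTop 1] with n hn
      exact harg n _ ((hkey n hn).1)
    have hmem : (1 : ℝ) / t ∈ Set.Ici (1 : ℝ) := by
      rw [Set.mem_Ici, le_div_iff₀ ht0]
      linarith
    have hD : Tendsto (fun n : ℕ => f ((n : ℝ) / (⌈(n : ℝ) * t⌉₊ : ℝ))) atTop
        (𝓝 (f (1 / t))) := (hf _ hmem).tendsto.comp hC
    apply hD.congr'
    filter_upwards [eventually_ge_atTop 1] with n hn
    exact (hval n _ ((hkey n hn).1) t ((hkey n hn).2)).symm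
  -- the integral of g n is the Riemann sum
  have hint : ∀ n : ℕ, 1 ≤ n →
      ∫ t, g n t ∂μ = (1 / (n : ℝ)) * ∑ i ∈ Finset.Icc 1 n, f ((n : ℝ) / i) := by
    intro n hn
    have hnpos : 0 < (n : ℝ) := by exact_mod_cast hn
    simp only [hg]
    rw [integral_finset_sum]
    · rw [Finset.mul_sum]
      apply Finset.sum_congr rfl
      intro i hi
      have hi' := Finset.mem_Icc.1 hi
      have h1i : (1 : ℝ) ≤ (i : ℝ) := by exact_mod_cast hi'.1
      have hin : (i : ℝ) ≤ (n : ℝ) := by exact_mod_cast hi'.2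
      rw [integral_indicator measurableSet_Ioc, setIntegral_const, hμ,
        measureReal_restrict_apply measurableSet_Ioc]
      have hsub : Set.Ioc (((i : ℝ) - 1) / n) ((i : ℝ) / n) ∩ Set.Ioc (0 : ℝ) 1 =
          Set.Ioc (((i : ℝ) - 1) / n) ((i : ℝ) / n) := by
        apply Set.inter_eq_left.2
        apply Set.Ioc_subset_Ioc
        · exact div_nonneg (by linarith) hnpos.le
        · rw [div_le_one hnpos]; exact hin
      rw [hsub, Real.volume_real_Ioc]
      have hlen : (i : ℝ) / n - ((i : ℝ) - 1) / n = 1 / n := by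
        field_simp; ring
      rw [hlen, max_eq_left (by positivity), smul_eq_mul]
    · intro i hi
      apply Integrable.indicator _ measurableSet_Ioc
      rw [hμ]
      exact integrableOn_const (by simp [Real.volume_Ioc])
  -- conclude by dominated convergence
  have hMint : Integrable (fun _ : ℝ => M) μ := by
    rw [hμ]
    exact integrableOn_const (by simp [Real.volume_Ioc])
  have hmain := tendsto_integral_of_dominated_convergence (fun _ => M) hmeas hMint
    (fun n => ae_of_all _ fun t => by rw [Real.norm_eq_abs]; exact hbound n t) hlim
  apply hmain.congr'
  filter_upwards [eventually_ge_atTop 1] with n hn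
  exact hint n hn
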